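/- Let d, n ≥ 1, let 1 ≤ a ≤ n with gcd(a,n) = 1, and assume dna ≥ 2. Set r = dn² and e = dna - 1 (so 1 ≤ e < r and gcd(e,r) = 1). Let r/e = [b_1,...,b_k] be the Hirzebruch–Jung continued fraction expansion, and let e' be the inverse of e modulo r with 1 ≤ e' < r. Then k + 2 + Σ_{i=1}^{k}(2 - b_i) - (e + e' + 2)/r = d - 1. -/

import Mathlib

/-- Evaluation of a Hirzebruch–Jung continued fraction `[b₁,…,b_k]` as
`b₁ - 1/(b₂ - 1/(⋯ - 1/b_k))`. -/
def hjEval : List ℚ → ℚ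
  | [] => 0
  | b :: rest => b - 1 / hjEval rest

/-- `b` is the Hirzebruch–Jung continued fraction expansion of `r/e`. -/
def IsHJExpansion (r e : ℕ) (b : List ℤ) : Prop :=
  b ≠ [] ∧ (∀ x ∈ b, 2 ≤ x) ∧ hjEval (b.map (fun x => (x : ℚ))) = (r : ℚ) / e

namespace BetaClassT

lemma map_coe_eq (l : List ℤ) : (List.map (fun x => x) (do
    let a ← l
    pure ((a : ℚ)))) = l.map (fun x : ℤ => (x : ℚ)) := by
  induction l with
  | nil => rfl
  | cons b t ih => simpa using ih

/-- Continuant matrix `(p, p', q, q')` representing `∏ [[bᵢ, -1], [1, 0]]`. -/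
def hjM : List ℤ → ℤ × ℤ × ℤ × ℤ
  | [] => (1, 0, 0, 1)
  | b :: t => (b * (hjM t).1 - (hjM t).2.2.1, b * (hjM t).2.1 - (hjM t).2.2.2,
      (hjM t).1, (hjM t).2.1)

lemma hjM_append (l : List ℤ) (x : ℤ) :
    hjM (l ++ [x]) = (x * (hjM l).1 + (hjM l).2.1, -(hjM l).1,
      x * (hjM l).2.2.1 + (hjM l).2.2.2, -(hjM l).2.2.1) := by
  induction l with
  | nil => simp [hjM]
  | cons b t ih =>
      show hjM (b :: (t ++ [x])) = _
      simp only [hjM, ih]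
      simp only [Prod.mk.injEq, and_true]
      all_goals and_intros <;> ring

lemma hjM_pos (l : List ℤ) (h : ∀ x ∈ l, 2 ≤ x) :
    (hjM l).2.2.1 < (hjM l).1 ∧ 0 ≤ (hjM l).2.2.1 ∧ (l ≠ [] → 1 ≤ (hjM l).2.2.1) := by
  induction l with
  | nil => simp [hjM]
  | cons b t ih =>
      have hb : 2 ≤ b := h b (by simp)
      obtain ⟨h1, h2, h3⟩ := ih (fun x hx => h x (by simp [hx]))
      by_cases ht : t = []
      · subst ht; simp [hjM]; omega
      · have h4 := h3 ht
        simp only [hjM]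
        refine ⟨?_, by omega, fun _ => by omega⟩
        nlinarith

lemma hjEval_hjM (l : List ℤ) (h : ∀ x ∈ l, 2 ≤ x) (hne : l ≠ []) :
    hjEval (l.map (fun x : ℤ => (x : ℚ))) = ((hjM l).1 : ℚ) / ((hjM l).2.2.1 : ℚ) := by
  induction l with
  | nil => simp at hne
  | cons b t ih =>
      by_cases ht : t = []
      · subst ht; simp [hjEval, hjM]
      · have ht2 : ∀ x ∈ t, 2 ≤ x := fun x hx => h x (by simp [hx])
        obtain ⟨h1, h2, h3⟩ := hjM_pos t ht2
        have h4 := h3 ht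
        have hq0 : ((hjM t).2.2.1 : ℚ) ≠ 0 := by exact_mod_cast (by omega : (hjM t).2.2.1 ≠ 0)
        have hp0 : ((hjM t).1 : ℚ) ≠ 0 := by exact_mod_cast (by omega : (hjM t).1 ≠ 0)
        rw [List.map_cons, hjEval, ih ht2 ht]
        simp only [hjM]
        push_cast
        field_simp
        try ring

lemma hjEval_gt_one (l : List ℤ) (h : ∀ x ∈ l, 2 ≤ x) (hne : l ≠ []) :
    1 < hjEval (l.map (fun x : ℤ => (x : ℚ))) := by
  rw [hjEval_hjM l h hne]
  obtain ⟨h1, h2, h3⟩ := hjM_pos l h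
  have h4 := h3 hne
  rw [one_lt_div (by exact_mod_cast (by omega : (0:ℤ) < (hjM l).2.2.1))]
  exact_mod_cast h1

lemma hj_inj : ∀ l l' : List ℤ, (∀ x ∈ l, 2 ≤ x) → (∀ x ∈ l', 2 ≤ x) →
    hjEval (l.map (fun x : ℤ => (x : ℚ))) = hjEval (l'.map (fun x : ℤ => (x : ℚ))) → l = l' := by
  intro l
  induction l with
  | nil =>
      intro l' _ h' he
      cases l' with
      | nil => rfl
      | cons c t' =>
          exfalso
          have h1 := hjEval_gt_one (c :: t') h' (by simp)
          rw [List.map_nil] at he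
          simp only [List.map_cons, hjEval] at he
          simp only [List.map_cons, hjEval] at h1
          linarith
  | cons b t ih =>
      intro l' h h' he
      cases l' with
      | nil =>
          exfalso
          have h1 := hjEval_gt_one (b :: t) h (by simp)
          rw [List.map_nil] at he
          simp only [List.map_cons, hjEval] at he
          simp only [List.map_cons, hjEval] at h1
          linarith
      | cons c t' =>
          have ht2 : ∀ x ∈ t, 2 ≤ x := fun x hx => h x (by simp [hx])
          have ht2' : ∀ x ∈ t', 2 ≤ x := fun x hx => h' x (by simp [hx])
          simp only [List.map_cons, hjEval] at he
          set u := 1 / hjEval (t.map (fun x : ℤ => (x : ℚ))) with hu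
          set v := 1 / hjEval (t'.map (fun x : ℤ => (x : ℚ))) with hv
          have hu01 : (u = 0 ∧ t = []) ∨ (0 < u ∧ u < 1 ∧ t ≠ []) := by
            by_cases ht : t = []
            · left; refine ⟨?_, ht⟩; rw [hu, ht]; simp [hjEval]
            · right
              have h1 := hjEval_gt_one t ht2 ht
              refine ⟨by rw [hu]; positivity, ?_, ht⟩
              rw [hu, div_lt_one (by linarith)]; linarith
          have hv01 : (v = 0 ∧ t' = []) ∨ (0 < v ∧ v < 1 ∧ t' ≠ []) := by
            by_cases ht : t' = []
            · left; refine ⟨?_, ht⟩; rw [hv, ht]; simp [hjEval]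
            · right
              have h1 := hjEval_gt_one t' ht2' ht
              refine ⟨by rw [hv]; positivity, ?_, ht⟩
              rw [hv, div_lt_one (by linarith)]; linarith
          have hu0 : 0 ≤ u ∧ u < 1 := by
            rcases hu01 with ⟨h1, _⟩ | ⟨h1, h2, _⟩
            · rw [h1]; norm_num
            · exact ⟨le_of_lt h1, h2⟩
          have hv0 : 0 ≤ v ∧ v < 1 := by
            rcases hv01 with ⟨h1, _⟩ | ⟨h1, h2, _⟩
            · rw [h1]; norm_num
            · exact ⟨le_of_lt h1, h2⟩
          obtain ⟨hu1, hu2⟩ := hu0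
          obtain ⟨hv1, hv2⟩ := hv0
          have hbc : b = c := by
            have q1 : (b : ℚ) < c + 1 := by linarith
            have q2 : (c : ℚ) < b + 1 := by linarith
            have q1' : b < c + 1 := by exact_mod_cast q1
            have q2' : c < b + 1 := by exact_mod_cast q2
            omega
          subst hbc
          have huv : u = v := by linarith
          rcases hu01 with ⟨h1, ht⟩ | ⟨h1, h1', ht⟩
          · rcases hv01 with ⟨h2, ht'⟩ | ⟨h2, h2', ht'⟩
            · rw [ht, ht']
            · exfalso; linarith
          · rcases hv01 with ⟨h2, ht'⟩ | ⟨h2, h2', ht'⟩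
            · exfalso; linarith
            · have hE1 := hjEval_gt_one t ht2 ht
              have hE2 := hjEval_gt_one t' ht2' ht'
              have hE : hjEval (t.map (fun x : ℤ => (x : ℚ)))
                  = hjEval (t'.map (fun x : ℤ => (x : ℚ))) := by
                rw [hu, hv, div_eq_div_iff (by linarith) (by linarith)] at huv
                linarith
              rw [ih t' ht2 ht2' hE]
def opR : List ℤ → List ℤ
  | [] => []
  | x :: t => (x + 1) :: (t ++ [2])

def opL (l : List ℤ) : List ℤ := 2 :: (l.dropLast ++ [l.getLastD 0 + 1])

lemma hjM_opR (x : ℤ) (t : List ℤ) :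
    hjM (opR (x :: t)) =
      (2 * ((hjM (x :: t)).1 + (hjM (x :: t)).2.2.1) + (hjM (x :: t)).2.1 + (hjM (x :: t)).2.2.2,
       -((hjM (x :: t)).1 + (hjM (x :: t)).2.2.1),
       2 * (hjM (x :: t)).2.2.1 + (hjM (x :: t)).2.2.2,
       -(hjM (x :: t)).2.2.1) := by
  show hjM ((x + 1) :: (t ++ [2])) = _
  simp only [hjM, hjM_append]
  simp only [Prod.mk.injEq, and_true]
  all_goals and_intros <;> ring

lemma hjM_opL (m : List ℤ) (x : ℤ) :
    hjM (opL (m ++ [x])) =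
      (2 * ((hjM (m ++ [x])).1 - (hjM (m ++ [x])).2.1)
          - ((hjM (m ++ [x])).2.2.1 - (hjM (m ++ [x])).2.2.2),
       2 * (hjM (m ++ [x])).2.1 - (hjM (m ++ [x])).2.2.2,
       (hjM (m ++ [x])).1 - (hjM (m ++ [x])).2.1,
       (hjM (m ++ [x])).2.1) := by
  have hform : opL (m ++ [x]) = 2 :: (m ++ [x + 1]) := by
    simp [opL, List.dropLast_concat, List.getLastD_concat]
  rw [hform]
  simp only [hjM, hjM_append]
  simp only [Prod.mk.injEq, and_true, true_and]
  all_goals and_intros <;> ring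

lemma hjM_replicate (k : ℕ) :
    hjM (List.replicate k 2) = ((k : ℤ) + 1, -(k : ℤ), (k : ℤ), -((k : ℤ) - 1)) := by
  induction k with
  | zero => simp [hjM]
  | succ k ih =>
      rw [List.replicate_succ]
      simp only [hjM, ih]
      simp only [Prod.mk.injEq]
      push_cast
      all_goals and_intros <;> ring

/-- The canonical T-chain for `(d, n, a)`. -/
def tchain (d : ℕ) : ℕ → ℕ → List ℤ
  | n, a =>
    if _h1 : n ≤ 2 then
      (if d = 1 then [4] else 3 :: (List.replicate (d - 2) 2 ++ [3]))
    else if h2 : 1 ≤ a ∧ 2 * a < n then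
      opR (tchain d (n - a) a)
    else if h3 : a < n then
      opL (tchain d a (2 * a - n))
    else []
  termination_by n a => n
  decreasing_by all_goals omega

lemma tchain_spec (d : ℕ) (hd : 1 ≤ d) : ∀ n a : ℕ, 2 ≤ n → 1 ≤ a → a < n → Nat.Coprime a n →
    (tchain d n a ≠ [] ∧ (∀ x ∈ tchain d n a, 2 ≤ x)) ∧
    hjM (tchain d n a) =
      ((d : ℤ) * n ^ 2, -((d : ℤ) * n * ((n : ℤ) - a) - 1), (d : ℤ) * n * a - 1,
        -((d : ℤ) * a * ((n : ℤ) - a) - 1)) ∧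
    ((tchain d n a).length : ℤ) + ((tchain d n a).map (fun x => 2 - x)).sum = (d : ℤ) - 2 := by
  intro n
  induction n using Nat.strong_induction_on with
  | _ n ih =>
  intro a hn ha1 han hcop
  by_cases hn2 : n = 2
  · subst hn2
    have ha : a = 1 := by omega
    subst ha
    rw [tchain, dif_pos (le_refl 2)]
    by_cases hd1 : d = 1
    · subst hd1
      rw [if_pos rfl]
      refine ⟨⟨by simp, fun x hx => by simp at hx; omega⟩, ?_, by norm_num⟩
      norm_num [hjM]
    · rw [if_neg hd1]
      have hd2 : 2 ≤ d := by omega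
      have hK : ((d - 2 : ℕ) : ℤ) = (d : ℤ) - 2 := by omega
      refine ⟨⟨by simp, ?_⟩, ?_, ?_⟩
      · intro x hx
        rcases List.mem_cons.mp hx with rfl | hx'
        · norm_num
        · rcases List.mem_append.mp hx' with h | h
          · rw [List.eq_of_mem_replicate h]
          · rw [List.mem_singleton.mp h]; norm_num
      · simp only [hjM, hjM_append, hjM_replicate, hK]
        simp only [Prod.mk.injEq]
        all_goals and_intros <;> push_cast <;> ring
      · simp only [List.length_cons, List.length_append, List.length_replicate,
          List.map_cons, List.map_append, List.map_replicate, List.sum_cons,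
          List.sum_append, List.sum_replicate, List.sum_nil, List.map_nil,
          List.length_singleton, List.length_nil, smul_zero]
        push_cast [hK]
        ring
  · -- n ≥ 3
    have hn3 : 3 ≤ n := by omega
    have h2an : 2 * a ≠ n := by
      intro hc
      have hdvd : a ∣ n := ⟨2, by omega⟩
      have := Nat.Coprime.eq_one_of_dvd hcop hdvd
      omega
    by_cases hlt : 2 * a < n
    · -- opR case
      have hcop' : Nat.Coprime a (n - a) :=
        (Nat.coprime_sub_self_right (le_of_lt han)).mpr hcop
      have key := ih (n - a) (by omega) a (by omega) ha1 (by omega) hcop'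
      obtain ⟨⟨kne, kent⟩, kM, kS⟩ := key
      have heq : tchain d n a = opR (tchain d (n - a) a) := by
        rw [tchain, dif_neg (by omega : ¬ n ≤ 2), dif_pos ⟨ha1, hlt⟩]
      obtain ⟨x, t, hxt⟩ : ∃ x t, tchain d (n - a) a = x :: t := by
        cases h : tchain d (n - a) a with
        | nil => exact absurd h kne
        | cons x t => exact ⟨x, t, rfl⟩
      have hm : ((n - a : ℕ) : ℤ) = (n : ℤ) - a := by omega
      rw [heq, hxt]
      rw [hxt] at kM kS kent
      rw [hm] at kM
      refine ⟨⟨by simp [opR], ?_⟩, ?_, ?_⟩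
      · intro y hy
        rw [show opR (x :: t) = (x + 1) :: (t ++ [2]) from rfl] at hy
        rcases List.mem_cons.mp hy with rfl | hy'
        · have := kent x List.mem_cons_self; omega
        · rcases List.mem_append.mp hy' with h | h
          · exact kent y (List.mem_cons_of_mem _ h)
          · have h2 : y = 2 := List.mem_singleton.mp h
            omega
      · rw [hjM_opR, kM]
        simp only [Prod.mk.injEq]
        all_goals and_intros <;> ring
      · simp only [opR, List.length_cons, List.length_append, List.length_singleton,
          List.map_cons, List.map_append, List.sum_cons, List.sum_append,
          List.map_nil, List.sum_nil, List.length_nil] at kS ⊢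
        push_cast at kS ⊢
        linarith
    · -- opL case
      have hgt : n < 2 * a := by omega
      have ha2 : 2 ≤ a := by omega
      have hcop' : Nat.Coprime (2 * a - n) a := by
        have hg1 : Nat.gcd (2 * a - n) a ∣ 2 * a :=
          Dvd.dvd.mul_left (Nat.gcd_dvd_right _ _) 2
        have hg2 : Nat.gcd (2 * a - n) a ∣ n := by
          have h3 := Nat.dvd_sub hg1 (Nat.gcd_dvd_left (2 * a - n) a)
          rwa [show 2 * a - (2 * a - n) = n by omega] at h3
        have hg3 : Nat.gcd (2 * a - n) a ∣ Nat.gcd a n :=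
          Nat.dvd_gcd (Nat.gcd_dvd_right _ _) hg2
        have hcop'' : Nat.gcd a n = 1 := hcop
        rw [hcop''] at hg3
        exact Nat.dvd_one.mp hg3
      have key := ih a (by omega) (2 * a - n) ha2 (by omega) (by omega) hcop'
      obtain ⟨⟨kne, kent⟩, kM, kS⟩ := key
      have heq : tchain d n a = opL (tchain d a (2 * a - n)) := by
        rw [tchain, dif_neg (by omega : ¬ n ≤ 2),
          dif_neg (by omega : ¬(1 ≤ a ∧ 2 * a < n)), dif_pos han]
      obtain ⟨m, x, hmx⟩ : ∃ m x, tchain d a (2 * a - n) = m ++ [x] := by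
        rcases List.eq_nil_or_concat (tchain d a (2 * a - n)) with h | ⟨m, x, h⟩
        · exact absurd h kne
        · exact ⟨m, x, by rw [h, List.concat_eq_append]⟩
      have hc : ((2 * a - n : ℕ) : ℤ) = 2 * (a : ℤ) - n := by omega
      have hform : opL (m ++ [x]) = 2 :: (m ++ [x + 1]) := by
        simp [opL, List.dropLast_concat, List.getLastD_concat]
      rw [heq, hmx]
      rw [hmx] at kM kS kent
      rw [hc] at kM
      refine ⟨⟨by rw [hform]; simp, ?_⟩, ?_, ?_⟩
      · rw [hform]
        intro y hy
        rcases List.mem_cons.mp hy with rfl | hy'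
        · norm_num
        · rcases List.mem_append.mp hy' with h | h
          · exact kent y (List.mem_append_left _ h)
          · have h2 : y = x + 1 := List.mem_singleton.mp h
            have := kent x (List.mem_append_right _ (List.mem_singleton_self _))
            omega
      · rw [hjM_opL, kM]
        simp only [Prod.mk.injEq]
        all_goals and_intros <;> ring
      · rw [hform]
        simp only [List.length_cons, List.length_append, List.length_singleton,
          List.map_cons, List.map_append, List.sum_cons, List.sum_append,
          List.map_nil, List.sum_nil, List.length_nil] at kS ⊢
        push_cast at kS ⊢
        linarith
lemma coe_list_eq (l : List ℤ) : (do
    let a ← l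
    pure ((a : ℚ))) = l.map (fun x : ℤ => (x : ℚ)) := by
  induction l with
  | nil => rfl
  | cons b t ih => simpa using ih

lemma sum_bridge (l : List ℤ) :
    (l.map (fun x => 2 - (x : ℚ))).sum = (((l.map (fun x : ℤ => 2 - x)).sum : ℤ) : ℚ) := by
  rw [coe_list_eq, List.map_map]
  induction l with
  | nil => rfl
  | cons c t ih =>
      simp only [List.map_cons, List.sum_cons, ih, Function.comp_apply]
      push_cast
      ring

lemma inv_unique {r e x y : ℕ} (hcop : Nat.gcd r e = 1) (hx : e * x ≡ 1 [MOD r])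
    (hy : e * y ≡ 1 [MOD r]) (hxr : x < r) (hyr : y < r) : x = y := by
  have h := Nat.ModEq.cancel_left_of_coprime hcop (hx.trans hy.symm)
  have h2 : x % r = y % r := h
  rwa [Nat.mod_eq_of_lt hxr, Nat.mod_eq_of_lt hyr] at h2

lemma cop_er (d n a : ℕ) (h2 : 2 ≤ d * n * a) : Nat.gcd (d * n ^ 2) (d * n * a - 1) = 1 := by
  have h1 : Nat.Coprime (d * n * a) (d * n * a - 1) :=
    (Nat.coprime_self_sub_right (by omega)).mpr (Nat.coprime_one_right _)
  have h2' : Nat.Coprime ((d * n * a) ^ 2) (d * n * a - 1) := Nat.Coprime.pow_left 2 h1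
  have hdvd : d * n ^ 2 ∣ (d * n * a) ^ 2 := ⟨d * a ^ 2, by ring⟩
  exact Nat.Coprime.coprime_dvd_left hdvd h2'

end BetaClassT

open BetaClassT

theorem beta_classT (d n a : ℕ) (hd : 1 ≤ d) (hn : 1 ≤ n) (ha : 1 ≤ a) (han : a ≤ n)
    (hcop : Nat.Coprime a n) (h2 : 2 ≤ d * n * a)
    (e' : ℕ) (he'1 : 1 ≤ e') (he'r : e' < d * n ^ 2)
    (he' : (d * n * a - 1) * e' ≡ 1 [MOD d * n ^ 2])
    (b : List ℤ) (hb : IsHJExpansion (d * n ^ 2) (d * n * a - 1) b) :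
    (b.length : ℚ) + 2 + (b.map (fun x => 2 - (x : ℚ))).sum
      - (((d * n * a - 1 : ℕ) : ℚ) + e' + 2) / (d * n ^ 2) = (d : ℚ) - 1 := by
  obtain ⟨hbne, hbent, hbval⟩ := hb
  rw [map_coe_eq] at hbval
  by_cases hn1 : n = 1
  · -- the case n = 1, a = 1, chain [2,…,2]
    subst hn1
    have ha' : a = 1 := by omega
    subst ha'
    have hd2 : 2 ≤ d := by omega
    set L : List ℤ := List.replicate (d - 1) (2 : ℤ) with hL
    have hent : ∀ x ∈ L, 2 ≤ x := by
      intro x hx; rw [List.eq_of_mem_replicate hx]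
    have hne : L ≠ [] := by
      intro hc
      have := congrArg List.length hc
      simp [hL] at this
      omega
    have hval : hjEval (L.map (fun x : ℤ => (x : ℚ)))
        = ((d * 1 ^ 2 : ℕ) : ℚ) / ((d * 1 * 1 - 1 : ℕ) : ℚ) := by
      rw [hjEval_hjM L hent hne, hL, hjM_replicate]
      have c1 : ((d - 1 : ℕ) : ℤ) = (d : ℤ) - 1 := by omega
      have c2 : ((d * 1 * 1 - 1 : ℕ) : ℚ) = (d : ℚ) - 1 := by
        push_cast [Nat.cast_sub (show 1 ≤ d * 1 * 1 by omega)]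
        ring
      have c3 : ((d * 1 ^ 2 : ℕ) : ℚ) = (d : ℚ) := by push_cast; ring
      rw [c2, c3]
      simp only [c1]
      push_cast
      ring
    have hbeq : b = L := hj_inj b L hbent hent (by rw [hbval, hval])
    -- identify e'
    have hkey : (d * 1 * 1 - 1) * (d - 1) = d * 1 ^ 2 * (d - 2) + 1 := by
      zify [show 1 ≤ d * 1 * 1 by omega, show 1 ≤ d by omega, show 2 ≤ d by omega]
      ring
    have hmod : (d * 1 * 1 - 1) * (d - 1) ≡ 1 [MOD d * 1 ^ 2] :=
      ((Nat.modEq_iff_dvd' (by rw [hkey]; exact Nat.le_add_left 1 _)).mpr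
        (by rw [hkey, Nat.add_sub_cancel]; exact Dvd.intro _ rfl)).symm
    have hr1 : d * 1 ^ 2 = d := by ring
    have he'eq : e' = d - 1 :=
      inv_unique (cop_er d 1 1 h2) he' hmod he'r (by omega)
    -- final computation
    rw [hbeq, he'eq, sum_bridge]
    have hlen : ((L.length : ℕ) : ℚ) = (d : ℚ) - 1 := by
      rw [hL, List.length_replicate]
      push_cast [Nat.cast_sub (show 1 ≤ d by omega)]
      ring
    have hS : ((L.map (fun x : ℤ => 2 - x)).sum : ℤ) = 0 := by
      rw [hL, List.map_replicate]
      simp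
    have hC : (((d * 1 * 1 - 1 : ℕ) : ℚ) + ((d - 1 : ℕ) : ℚ) + 2)
        / ((d : ℚ) * ((1 : ℕ) : ℚ) ^ 2) = 2 := by
      have hdne : (d : ℚ) ≠ 0 := by
        exact_mod_cast (by omega : d ≠ 0)
      rw [div_eq_iff (by simpa using hdne)]
      push_cast [Nat.cast_sub (show 1 ≤ d * 1 * 1 by omega), Nat.cast_sub (show 1 ≤ d by omega)]
      ring
    rw [hC]
    rw [hlen, hS]
    norm_num
  · -- the case n ≥ 2
    have hn2 : 2 ≤ n := by omega
    have han' : a < n := by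
      rcases Nat.lt_or_ge a n with h | h
      · exact h
      · exfalso
        have haeq : a = n := le_antisymm han h
        subst haeq
        have hg1 : Nat.gcd a a = a := Nat.gcd_self a
        have hg2 : Nat.gcd a a = 1 := hcop
        omega
    obtain ⟨⟨tne, tent⟩, tM, tS⟩ := tchain_spec d hd n a hn2 ha han' hcop
    have hval : hjEval ((tchain d n a).map (fun x : ℤ => (x : ℚ)))
        = ((d * n ^ 2 : ℕ) : ℚ) / ((d * n * a - 1 : ℕ) : ℚ) := by
      rw [hjEval_hjM _ tent tne, tM]
      have c2 : ((d * n * a - 1 : ℕ) : ℚ) = (d : ℚ) * n * a - 1 := by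
        push_cast [Nat.cast_sub (show 1 ≤ d * n * a by omega)]
        ring
      have c3 : ((d * n ^ 2 : ℕ) : ℚ) = (d : ℚ) * n ^ 2 := by push_cast; ring
      rw [c2, c3]
      push_cast
      ring_nf
    have hbeq : b = tchain d n a := hj_inj b _ hbent tent (by rw [hbval, hval])
    -- identify e'
    have hfpos : 1 ≤ d * n * (n - a) := Nat.mul_pos (Nat.mul_pos hd hn) (by omega)
    have hgpos : 1 ≤ d * a * (n - a) := Nat.mul_pos (Nat.mul_pos hd ha) (by omega)
    have hkey : (d * n * a - 1) * (d * n * (n - a) - 1) = d * n ^ 2 * (d * a * (n - a) - 1) + 1 := by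
      zify [show 1 ≤ d * n * a by omega, hfpos, hgpos, le_of_lt han']
      ring
    have hmod : (d * n * a - 1) * (d * n * (n - a) - 1) ≡ 1 [MOD d * n ^ 2] :=
      ((Nat.modEq_iff_dvd' (by rw [hkey]; exact Nat.le_add_left 1 _)).mpr
        (by rw [hkey, Nat.add_sub_cancel]; exact Dvd.intro _ rfl)).symm
    have hflt : d * n * (n - a) - 1 < d * n ^ 2 := by
      have h5 : d * n * (n - a) ≤ d * n * n := Nat.mul_le_mul_left _ (Nat.sub_le n a)
      have h6 : d * n * n = d * n ^ 2 := by ring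
      omega
    have he'eq : e' = d * n * (n - a) - 1 :=
      inv_unique (cop_er d n a h2) he' hmod he'r hflt
    -- final computation
    rw [hbeq, he'eq, sum_bridge]
    have hq : ((tchain d n a).length : ℚ)
        + (((tchain d n a).map (fun x : ℤ => 2 - x)).sum : ℤ) = (d : ℚ) - 2 := by
      have h7 := congrArg (fun z : ℤ => (z : ℚ)) tS
      push_cast at h7 ⊢
      convert h7 using 2 <;> push_cast <;> ring
    have hsum1 : d * n * a + d * n * (n - a) = d * n ^ 2 := by
      zify [le_of_lt han']
      ring
    have hsum2 : (d * n * a - 1) + (d * n * (n - a) - 1) + 2 = d * n ^ 2 := by omega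
    have hrne : (d : ℚ) * (n : ℚ) ^ 2 ≠ 0 := by
      apply mul_ne_zero
      · exact_mod_cast (by omega : d ≠ 0)
      · exact pow_ne_zero 2 (by exact_mod_cast (by omega : n ≠ 0))
    have hnum' : ((d * n * a - 1 : ℕ) : ℚ) + ((d * n * (n - a) - 1 : ℕ) : ℚ) + 2
        = (d : ℚ) * (n : ℚ) ^ 2 := by
      exact_mod_cast hsum2
    have hC : (((d * n * a - 1 : ℕ) : ℚ) + ((d * n * (n - a) - 1 : ℕ) : ℚ) + 2)
        / ((d : ℚ) * (n : ℚ) ^ 2) = 1 := by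
      rw [hnum']
      exact div_self hrne
    rw [hC]
    linarith [hq]
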